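/- Maximum-spanning-tree characterization of the minimax cut: let w be a symmetric nonnegative edge-weight function on the complete graph on a finite vertex set 𝒱 with |𝒱| ≥ 2, let T* be any spanning tree of the complete graph maximizing total edge weight, and let α be the minimum weight of an edge of T*. Then the minimax cut value φ* = min over nonempty proper subsets H ⊂ 𝒱 of φ(H) equals α, and deleting from T* an edge of weight α splits 𝒱 into two parts H, 𝒱\H with φ(H) = α. -/

import Mathlib

open scoped Classical

/-- Total weight of (the edges of) a graph `T` on a finite vertex set, for a
symmetric weight function `w`. -/
noncomputable def treeWeight {V : Type*} [Fintype V] (w : V → V → ℝ)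
    (hsymm : ∀ i j, w i j = w j i) (T : SimpleGraph V) : ℝ :=
  ∑ e ∈ T.edgeFinset, Sym2.lift ⟨w, hsymm⟩ e

/-- Cut value `φ(H) = max { w i j : i ∈ H, j ∉ H }` of a set of vertices
(as a supremum; for nonempty proper `H` the set is finite and nonempty, so this
is the maximum). -/
noncomputable def cutValue {V : Type*} [Fintype V] (w : V → V → ℝ)
    (H : Finset V) : ℝ :=
  sSup {x : ℝ | ∃ i ∈ H, ∃ j ∉ H, x = w i j}

section Aux

open SimpleGraph

variable {V : Type*}

lemma aux_reach (G : SimpleGraph V) (i j : V) :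
    ∀ {y x : V}, G.Walk y x →
      ((G.deleteEdges {s(i,j)}).Reachable i y ∨ (G.deleteEdges {s(i,j)}).Reachable j y) →
      ((G.deleteEdges {s(i,j)}).Reachable i x ∨ (G.deleteEdges {s(i,j)}).Reachable j x) := by
  intro y x p
  induction p with
  | nil => exact id
  | @cons u v c hadj q ih =>
    intro h
    apply ih
    by_cases he : s(u, v) = s(i, j)
    · rw [Sym2.eq_iff] at he
      rcases he with ⟨rfl, rfl⟩ | ⟨rfl, rfl⟩
      · exact Or.inr (Reachable.refl _)
      · exact Or.inl (Reachable.refl _)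
    · have hadj' : (G.deleteEdges {s(i,j)}).Adj u v := by
        simp [hadj, he]
      rcases h with h | h
      · exact Or.inl (h.trans hadj'.reachable)
      · exact Or.inr (h.trans hadj'.reachable)

lemma aux_cross [DecidableEq V] (G : SimpleGraph V) (H : Finset V) :
    ∀ {a b : V}, G.Walk a b → a ∈ H → b ∉ H →
      ∃ u v, G.Adj u v ∧ u ∈ H ∧ v ∉ H := by
  intro a b p
  induction p with
  | nil => intro ha hb; exact absurd ha hb
  | @cons u v c hadj q ih =>
    intro ha hb
    by_cases hc : v ∈ H
    · exact ih hc hb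
    · exact ⟨u, v, hadj, ha, hc⟩

end Aux

theorem maxST_minimax_cut {V : Type*} [Fintype V] [DecidableEq V]
    (hV : 2 ≤ Fintype.card V)
    (w : V → V → ℝ) (hsymm : ∀ i j, w i j = w j i) (hnonneg : ∀ i j, 0 ≤ w i j)
    (T : SimpleGraph V) (hT : T.IsTree)
    (hmax : ∀ T' : SimpleGraph V, T'.IsTree →
      treeWeight w hsymm T' ≤ treeWeight w hsymm T)
    (α : ℝ) (hα : IsLeast {x : ℝ | ∃ i j : V, T.Adj i j ∧ x = w i j} α) :
    IsLeast {x : ℝ | ∃ H : Finset V, H.Nonempty ∧ H ≠ Finset.univ ∧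
        x = cutValue w H} α ∧
    ∀ i j : V, T.Adj i j → w i j = α →
      ∃ H : Finset V, H.Nonempty ∧ H ≠ Finset.univ ∧
        (∀ x : V, x ∈ H ↔ (T.deleteEdges {s(i, j)}).Reachable i x) ∧
        cutValue w H = α := by
  classical
  open SimpleGraph in
  have hconnT : T.Connected := hT.isConnected
  have hbdd : ∀ H : Finset V, BddAbove {x : ℝ | ∃ i ∈ H, ∃ j ∉ H, x = w i j} := by
    intro H
    apply Set.Finite.bddAbove
    apply (Set.finite_range fun p : V × V => w p.1 p.2).subset
    rintro x ⟨i, _, j, _, rfl⟩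
    exact ⟨(i, j), rfl⟩
  have key : ∀ i j : V, T.Adj i j → w i j = α →
      ∃ H : Finset V, H.Nonempty ∧ H ≠ Finset.univ ∧
        (∀ x : V, x ∈ H ↔ (T.deleteEdges {s(i, j)}).Reachable i x) ∧
        cutValue w H = α := by
    intro i j hij hwij
    set G' := T.deleteEdges {s(i, j)} with hG'
    set H : Finset V := Finset.univ.filter (fun x => G'.Reachable i x) with hH
    have hmem : ∀ x, x ∈ H ↔ G'.Reachable i x := by
      intro x; simp [hH]
    have hiH : i ∈ H := (hmem i).2 (SimpleGraph.Reachable.refl i)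
    have hbr : T.IsBridge s(i, j) :=
      (SimpleGraph.isAcyclic_iff_forall_adj_isBridge.mp hT.IsAcyclic) hij
    have hjH : j ∉ H := by
      rw [hmem]
      exact SimpleGraph.isBridge_iff.mp hbr
    have hdi : ∀ x, G'.Reachable i x ∨ G'.Reachable j x := by
      intro x
      exact aux_reach T i j ((hconnT i x).some) (Or.inl (SimpleGraph.Reachable.refl i))
    have hub : ∀ i' ∈ H, ∀ j' ∉ H, w i' j' ≤ α := by
      intro i' hi' j' hj'
      have hri' : G'.Reachable i i' := (hmem i').1 hi'
      have hrj' : ¬ G'.Reachable i j' := fun h => hj' ((hmem j').2 h)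
      have hij' : i' ≠ j' := by rintro rfl; exact hj' hi'
      have hrjj' : G'.Reachable j j' := (hdi j').resolve_left hrj'
      by_cases heq : s(i', j') = s(i, j)
      · rw [Sym2.eq_iff] at heq
        rcases heq with ⟨rfl, rfl⟩ | ⟨rfl, rfl⟩
        · exact le_of_eq hwij
        · rw [hsymm]; exact le_of_eq hwij
      · have henotT : s(i', j') ∉ T.edgeSet := by
          intro hmem'
          have hadjG' : G'.Adj i' j' := by
            rw [hG', SimpleGraph.deleteEdges_adj]
            exact ⟨(SimpleGraph.mem_edgeSet T).mp hmem', by simpa using heq⟩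
          exact hrj' (hri'.trans hadjG'.reachable)
        set T' := G' ⊔ SimpleGraph.fromEdgeSet {s(i', j')} with hT'
        have hG'le : G' ≤ T' := le_sup_left
        have hadj' : T'.Adj i' j' := by
          rw [hT', SimpleGraph.sup_adj, SimpleGraph.fromEdgeSet_adj]
          exact Or.inr ⟨rfl, hij'⟩
        have hreach' : ∀ x, T'.Reachable i' x := by
          intro x
          rcases hdi x with h | h
          · exact ((hri'.symm).mono hG'le).trans (h.mono hG'le)
          · exact (hadj'.reachable).trans
              (((hrjj'.symm).mono hG'le).trans (h.mono hG'le))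
        have hne : Nonempty V := ⟨i⟩
        have hconn : T'.Connected :=
          SimpleGraph.Connected.mk fun u v => ((hreach' u).symm).trans (hreach' v)
        have hedgeT' : T'.edgeSet = insert (s(i', j')) (T.edgeSet \ {s(i, j)}) := by
          rw [hT', SimpleGraph.edgeSet_sup, hG', SimpleGraph.edgeSet_deleteEdges,
            SimpleGraph.edgeSet_fromEdgeSet]
          ext e
          simp only [Set.mem_union, Set.mem_diff, Set.mem_singleton_iff, Set.mem_insert_iff,
            Set.mem_setOf_eq]
          constructor
          · rintro (h | ⟨rfl, _⟩)
            · exact Or.inr h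
            · exact Or.inl rfl
          · rintro (rfl | h)
            · exact Or.inr ⟨rfl, by simp [hij']⟩
            · exact Or.inl h
        have hacy : T'.IsAcyclic := by
          intro v c hc
          by_cases he : s(i', j') ∈ c.edges
          · have hr := (SimpleGraph.adj_and_reachable_delete_edges_iff_exists_cycle.mpr
              ⟨v, c, hc, he⟩).2
            have hle : T' \ SimpleGraph.fromEdgeSet {s(i', j')} ≤ G' := by
              intro a b hab
              rw [SimpleGraph.sdiff_adj] at hab
              rcases hab.1 with h1 | h1
              · exact h1
              · exact absurd h1 hab.2
            exact hrj' (hri'.trans (hr.mono hle))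
          · have hsub : ∀ e ∈ c.edges, e ∈ T.edgeSet := by
              intro e hce
              have heT' : e ∈ T'.edgeSet := c.edges_subset_edgeSet hce
              rw [hedgeT'] at heT'
              rcases heT' with rfl | hmem2
              · exact absurd hce he
              · exact hmem2.1
            exact hT.IsAcyclic (c.transfer T hsub) (hc.transfer hsub)
        have hT'tree : T'.IsTree := ⟨hconn, hacy⟩
        have hijT : s(i, j) ∈ T.edgeFinset := by
          rw [SimpleGraph.mem_edgeFinset]; exact hij
        have hedgeF : T'.edgeFinset = insert (s(i', j')) (T.edgeFinset.erase (s(i, j))) := by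
          ext e
          rw [SimpleGraph.mem_edgeFinset, hedgeT']
          simp only [Set.mem_insert_iff, Set.mem_diff, Set.mem_singleton_iff,
            Finset.mem_insert, Finset.mem_erase, SimpleGraph.mem_edgeFinset]
          tauto
        have hnotmem : s(i', j') ∉ T.edgeFinset.erase (s(i, j)) := by
          intro h
          exact henotT ((SimpleGraph.mem_edgeFinset).mp (Finset.mem_of_mem_erase h))
        have hwT' : treeWeight w hsymm T'
            = w i' j' + (treeWeight w hsymm T - w i j) := by
          have h1 : treeWeight w hsymm T' =
              ∑ e ∈ insert s(i', j') (T.edgeFinset.erase s(i, j)),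
                Sym2.lift ⟨w, hsymm⟩ e := by
            unfold treeWeight
            apply Finset.sum_congr _ (fun _ _ => rfl)
            rw [← hedgeF]
            ext e
            simp [SimpleGraph.mem_edgeFinset]
          have h2 : treeWeight w hsymm T = ∑ e ∈ T.edgeFinset, Sym2.lift ⟨w, hsymm⟩ e := by
            unfold treeWeight
            apply Finset.sum_congr _ (fun _ _ => rfl)
            ext e
            simp [SimpleGraph.mem_edgeFinset]
          rw [h1, Finset.sum_insert hnotmem, Finset.sum_erase_eq_sub hijT, ← h2,
            Sym2.lift_mk, Sym2.lift_mk]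
        have hle := hmax T' hT'tree
        rw [hwT'] at hle
        linarith [hwij ▸ hle]
    have hgreat : IsGreatest {x : ℝ | ∃ i' ∈ H, ∃ j' ∉ H, x = w i' j'} α :=
      ⟨⟨i, hiH, j, hjH, hwij.symm⟩,
        fun x ⟨i', hi', j', hj', hx⟩ => hx ▸ hub i' hi' j' hj'⟩
    refine ⟨H, ⟨i, hiH⟩, ?_, hmem, hgreat.csSup_eq⟩
    intro h
    exact hjH (h ▸ Finset.mem_univ j)
  obtain ⟨i0, j0, hadj0, hw0⟩ := hα.1
  obtain ⟨H0, h1, h2, _, h4⟩ := key i0 j0 hadj0 hw0.symm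
  refine ⟨⟨⟨H0, h1, h2, h4.symm⟩, ?_⟩, key⟩
  rintro x ⟨H, hne, hproper, rfl⟩
  obtain ⟨a, ha⟩ := hne
  obtain ⟨b, hb⟩ : ∃ b, b ∉ H := by
    by_contra h
    push_neg at h
    exact hproper (Finset.eq_univ_iff_forall.mpr h)
  obtain ⟨u, v, huv, hu, hv⟩ := aux_cross T H ((hconnT a b).some) ha hb
  have h1 : α ≤ w u v := hα.2 ⟨u, v, huv, rfl⟩
  exact h1.trans (le_csSup (hbdd H) ⟨u, hu, v, hv, rfl⟩)
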